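/- Let D be a distributive lattice with zero, let P be a partial lattice, and let ⟦·≤·⟧ : P × P → D be a map. Then ⟨P, ⟦·≤·⟧⟩ is a D^op-measured partial lattice (i.e., satisfies, with meets and joins of D interchanged: ⟦a≤a⟧ = 0; ⟦a≤c⟧ ≤ ⟦a≤b⟧ ∨ ⟦b≤c⟧; x ≤ y implies ⟦x≤y⟧ = 0; a = ⋁X implies ⟦a≤b⟧ = ⋁_{x∈X}⟦x≤b⟧; a = ⋀X implies ⟦b≤a⟧ = ⋁_{x∈X}⟦b≤x⟧) if and only if there exists a (∨,0)-homomorphism φ : Con_c P → D with ⟦x≤y⟧ = φ(Θ⁺_P(x,y)) for all x, y ∈ P, where Θ⁺_P(x,y) denotes the least congruence θ of P with x ≤_θ y. -/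

import Mathlib

open Finset

/-- A partial lattice: a set with a partial order `le` and partial join and meet
operations (modelled as `Option`-valued functions on finite sets) such that any defined
join is a supremum and any defined meet is an infimum with respect to `le`. -/
structure PartialLattice (P : Type*) where
  le : P → P → Prop
  le_refl : ∀ a, le a a
  le_trans : ∀ a b c, le a b → le b c → le a c
  le_antisymm : ∀ a b, le a b → le b a → a = b
  join : Finset P → Option P
  meet : Finset P → Option P
  join_spec : ∀ (X : Finset P) (a : P), join X = some a →
    X.Nonempty ∧ (∀ x ∈ X, le x a) ∧ ∀ b, (∀ x ∈ X, le x b) → le a b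
  meet_spec : ∀ (X : Finset P) (a : P), meet X = some a →
    X.Nonempty ∧ (∀ x ∈ X, le a x) ∧ ∀ b, (∀ x ∈ X, le b x) → le b a

/-- A congruence of a partial lattice: a preordering containing `le` for which every
defined join is still a supremum and every defined meet is still an infimum. -/
def IsCongruence {P : Type*} (L : PartialLattice P) (r : Set (P × P)) : Prop :=
  (∀ a b, L.le a b → (a, b) ∈ r) ∧
  (∀ a, (a, a) ∈ r) ∧
  (∀ a b c, (a, b) ∈ r → (b, c) ∈ r → (a, c) ∈ r) ∧
  (∀ (X : Finset P) (a : P), L.join X = some a →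
    (∀ x ∈ X, (x, a) ∈ r) ∧ ∀ b, (∀ x ∈ X, (x, b) ∈ r) → (a, b) ∈ r) ∧
  (∀ (X : Finset P) (a : P), L.meet X = some a →
    (∀ x ∈ X, (a, x) ∈ r) ∧ ∀ b, (∀ x ∈ X, (b, x) ∈ r) → (b, a) ∈ r)

/-- The congruence of a partial lattice generated by a set of pairs.  The compact
congruences are exactly those generated by finite sets of pairs, and
`Θ⁺(x,y) = congGen L {(x,y)}`. -/
def congGen {P : Type*} (L : PartialLattice P) (S : Set (P × P)) : Set (P × P) :=
  ⋂₀ {r | IsCongruence L r ∧ S ⊆ r}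

section Aux

variable {P : Type*} (L : PartialLattice P)

lemma isCongruence_congGen (S : Set (P × P)) : IsCongruence L (congGen L S) := by
  refine ⟨?_, ?_, ?_, ?_, ?_⟩
  · intro a b hab r hr; exact hr.1.1 a b hab
  · intro a r hr; exact hr.1.2.1 a
  · intro a b c h1 h2 r hr; exact hr.1.2.2.1 a b c (h1 r hr) (h2 r hr)
  · intro X a hXa
    constructor
    · intro x hx r hr; exact ((hr.1.2.2.2.1 X a hXa).1 x hx)
    · intro b hb r hr; exact (hr.1.2.2.2.1 X a hXa).2 b (fun x hx => hb x hx r hr)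
  · intro X a hXa
    constructor
    · intro x hx r hr; exact ((hr.1.2.2.2.2 X a hXa).1 x hx)
    · intro b hb r hr; exact (hr.1.2.2.2.2 X a hXa).2 b (fun x hx => hb x hx r hr)

lemma subset_congGen (S : Set (P × P)) : S ⊆ congGen L S :=
  fun p hp r hr => hr.2 hp

lemma congGen_le {S r : Set (P × P)} (hr : IsCongruence L r) (hSr : S ⊆ r) :
    congGen L S ⊆ r := Set.sInter_subset_of_mem ⟨hr, hSr⟩

lemma congGen_mono {S T : Set (P × P)} (h : S ⊆ T) : congGen L S ⊆ congGen L T :=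
  congGen_le L (isCongruence_congGen L T) (h.trans (subset_congGen L T))

end Aux

/-- for a distributive lattice `D` with zero, a partial lattice `P` and a map
`⟦·≤·⟧ : P × P → D`, the pair `⟨P, ⟦·≤·⟧⟩` is a `Dᵒᵖ`-measured partial lattice (axioms
with meets and joins of `D` interchanged) if and only if there is a `(∨,0)`-homomorphism
`φ : Con_c P → D` with `⟦x≤y⟧ = φ(Θ⁺_P(x,y))` for all `x, y ∈ P`. -/
theorem measured_iff_exists_hom {D P : Type*} [DistribLattice D] [OrderBot D]
    (L : PartialLattice P) (bv : P → P → D) :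
    ((∀ a, bv a a = ⊥) ∧
     (∀ a b c, bv a c ≤ bv a b ⊔ bv b c) ∧
     (∀ x y, L.le x y → bv x y = ⊥) ∧
     (∀ (X : Finset P) (a : P), L.join X = some a → ∀ (hX : X.Nonempty) (b : P),
       bv a b = X.sup' hX fun x => bv x b) ∧
     (∀ (X : Finset P) (a : P), L.meet X = some a → ∀ (hX : X.Nonempty) (b : P),
       bv b a = X.sup' hX fun x => bv b x)) ↔
    (∃ φ : Set (P × P) → D,
      -- `φ` sends the least congruence to `0`
      φ (congGen L ∅) = ⊥ ∧
      -- `φ` is a join-homomorphism on compact (finitely generated) congruences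
      (∀ S T : Finset (P × P),
        φ (congGen L (↑S ∪ ↑T)) = φ (congGen L ↑S) ⊔ φ (congGen L ↑T)) ∧
      -- `⟦x≤y⟧ = φ(Θ⁺_P(x,y))`
      (∀ x y, bv x y = φ (congGen L {(x, y)}))) := by
  classical
  constructor
  · rintro ⟨H1, H2, H3, H4, H5⟩
    set f : Finset (P × P) → D := fun S => S.sup fun p => bv p.1 p.2 with hf
    -- θ c is a congruence
    have hθ : ∀ c : D, IsCongruence L {p : P × P | bv p.1 p.2 ≤ c} := by
      intro c
      refine ⟨?_, ?_, ?_, ?_, ?_⟩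
      · intro a b hab
        simp only [Set.mem_setOf_eq, H3 a b hab]; exact bot_le
      · intro a; simp only [Set.mem_setOf_eq, H1 a]; exact bot_le
      · intro a b c' h1 h2
        exact le_trans (H2 a b c') (sup_le h1 h2)
      · intro X a hXa
        obtain ⟨hX, hle, -⟩ := L.join_spec X a hXa
        constructor
        · intro x hx
          simp only [Set.mem_setOf_eq, H3 x a (hle x hx)]; exact bot_le
        · intro b hb
          simp only [Set.mem_setOf_eq, H4 X a hXa hX b]
          exact Finset.sup'_le hX _ (fun x hx => hb x hx)
      · intro X a hXa
        obtain ⟨hX, hle, -⟩ := L.meet_spec X a hXa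
        constructor
        · intro x hx
          simp only [Set.mem_setOf_eq, H3 a x (hle x hx)]; exact bot_le
        · intro b hb
          simp only [Set.mem_setOf_eq, H5 X a hXa hX b]
          exact Finset.sup'_le hX _ (fun x hx => hb x hx)
    have key : ∀ S T : Finset (P × P),
        congGen L ↑S ⊆ congGen L ↑T → f S ≤ f T := by
      intro S T hST
      have hT : (↑T : Set (P × P)) ⊆ {p : P × P | bv p.1 p.2 ≤ f T} := by
        intro p hp
        exact Finset.le_sup (f := fun p : P × P => bv p.1 p.2) hp
      have h2 : congGen L ↑T ⊆ {p : P × P | bv p.1 p.2 ≤ f T} :=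
        congGen_le L (hθ (f T)) hT
      refine Finset.sup_le (fun p hp => ?_)
      exact h2 (hST (subset_congGen L _ hp))
    refine ⟨fun r => if h : ∃ S : Finset (P × P), congGen L ↑S = r then f h.choose else ⊥,
      ?_, ?_, ?_⟩
    all_goals
      have hφ : ∀ S : Finset (P × P),
          (if h : ∃ T : Finset (P × P), congGen L ↑T = congGen L (↑S : Set (P × P))
            then f h.choose else ⊥) = f S := by
        intro S
        have h : ∃ T : Finset (P × P), congGen L ↑T = congGen L (↑S : Set (P × P)) :=
          ⟨S, rfl⟩
        rw [dif_pos h]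
        exact le_antisymm (key _ _ (le_of_eq h.choose_spec)) (key _ _ (ge_of_eq h.choose_spec))
    · beta_reduce
      rw [show (∅ : Set (P × P)) = ((∅ : Finset (P × P)) : Set (P × P)) by simp, hφ]
      simp [hf]
    · intro S T
      beta_reduce
      rw [show ((↑S ∪ ↑T : Set (P × P))) = ((S ∪ T : Finset (P × P)) : Set (P × P)) by simp,
        hφ, hφ, hφ]
      simp [hf, Finset.sup_union]
    · intro x y
      beta_reduce
      rw [show ({(x, y)} : Set (P × P)) = (({(x, y)} : Finset (P × P)) : Set (P × P)) by simp,
        hφ]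
      simp [hf]
  · rintro ⟨φ, hbot, hsup, hsingle⟩
    -- pairs in the trivial congruence have bv = ⊥
    have htriv : ∀ x y : P, ((x, y) ∈ congGen L (∅ : Set (P × P))) → bv x y = ⊥ := by
      intro x y hxy
      rw [hsingle x y]
      have h1 : congGen L ({(x, y)} : Set (P × P)) = congGen L (∅ : Set (P × P)) := by
        refine le_antisymm ?_ (congGen_mono L (Set.empty_subset _))
        exact congGen_le L (isCongruence_congGen L ∅) (Set.singleton_subset_iff.mpr hxy)
      rw [h1, hbot]
    -- monotonicity of φ on finitely generated congruences
    have hmono : ∀ S T : Finset (P × P), congGen L ↑S ⊆ congGen L ↑T →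
        φ (congGen L ↑S) ≤ φ (congGen L ↑T) := by
      intro S T hST
      have h1 : congGen L ((↑S ∪ ↑T : Set (P × P))) = congGen L ↑T := by
        refine le_antisymm ?_ (congGen_mono L Set.subset_union_right)
        refine congGen_le L (isCongruence_congGen L ↑T) ?_
        exact Set.union_subset (hST.trans' (subset_congGen L ↑S)) (subset_congGen L ↑T)
      calc φ (congGen L ↑S) ≤ φ (congGen L ↑S) ⊔ φ (congGen L ↑T) := le_sup_left
        _ = φ (congGen L ((↑S ∪ ↑T : Set (P × P)))) := (hsup S T).symm
        _ = φ (congGen L ↑T) := by rw [h1]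
    -- φ of a finitely generated congruence is the sup of the bv's
    have hφsup : ∀ S : Finset (P × P),
        φ (congGen L ↑S) = S.sup (fun p => bv p.1 p.2) := by
      intro S
      induction S using Finset.induction_on with
      | empty => simpa using hbot
      | @insert p S hp ih =>
        have : ((insert p S : Finset (P × P)) : Set (P × P)) =
            (({p} : Finset (P × P)) : Set (P × P)) ∪ ↑S := by simp
        rw [this, hsup, ih, Finset.sup_insert]
        congr 1
        rw [Finset.coe_singleton]
        exact (hsingle p.1 p.2).symm
    refine ⟨?_, ?_, ?_, ?_, ?_⟩
    · intro a
      exact htriv a a ((isCongruence_congGen L ∅).2.1 a)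
    · intro a b c
      have hc := isCongruence_congGen L ({(a, b)} ∪ {(b, c)} : Set (P × P))
      have hab : ((a, b)) ∈ congGen L ({(a, b)} ∪ {(b, c)} : Set (P × P)) :=
        subset_congGen L _ (Set.mem_union_left _ rfl)
      have hbc : ((b, c)) ∈ congGen L ({(a, b)} ∪ {(b, c)} : Set (P × P)) :=
        subset_congGen L _ (Set.mem_union_right _ rfl)
      have hac := hc.2.2.1 a b c hab hbc
      have hsub : congGen L ({(a, c)} : Set (P × P)) ⊆
          congGen L ({(a, b)} ∪ {(b, c)} : Set (P × P)) :=
        congGen_le L hc (Set.singleton_subset_iff.mpr hac)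
      have hsub' : congGen L (↑({(a, c)} : Finset (P × P))) ⊆
          congGen L (↑((({(a, b)} : Finset (P × P)) ∪ {(b, c)}))) := by
        rw [Finset.coe_union, Finset.coe_singleton, Finset.coe_singleton, Finset.coe_singleton]
        exact hsub
      calc bv a c = φ (congGen L ↑({(a, c)} : Finset (P × P))) := by
            rw [hsingle a c]; simp
        _ ≤ φ (congGen L ↑((({(a, b)} : Finset (P × P)) ∪ {(b, c)}))) := hmono _ _ hsub'
        _ = φ (congGen L (↑({(a, b)} : Finset (P × P)) ∪ ↑({(b, c)} : Finset (P × P)))) := by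
            rw [Finset.coe_union]
        _ = φ (congGen L ↑({(a, b)} : Finset (P × P))) ⊔
              φ (congGen L ↑({(b, c)} : Finset (P × P))) := hsup _ _
        _ = bv a b ⊔ bv b c := by rw [hsingle a b, hsingle b c]; simp
    · intro x y hxy
      exact htriv x y ((isCongruence_congGen L ∅).1 x y hxy)
    · intro X a hXa hX b
      set S : Finset (P × P) := X.image (fun x => (x, b)) with hS
      have hcg : congGen L ({(a, b)} : Set (P × P)) = congGen L ↑S := by
        apply le_antisymm
        · refine congGen_le L (isCongruence_congGen L ↑S) (Set.singleton_subset_iff.mpr ?_)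
          refine ((isCongruence_congGen L ↑S).2.2.2.1 X a hXa).2 b (fun x hx => ?_)
          exact subset_congGen L ↑S (Finset.mem_coe.mpr (Finset.mem_image_of_mem _ hx))
        · refine congGen_le L (isCongruence_congGen L _) ?_
          intro p hp
          simp only [hS, Finset.coe_image, Set.mem_image, Finset.mem_coe] at hp
          obtain ⟨x, hx, rfl⟩ := hp
          have hxa : (x, a) ∈ congGen L ({(a, b)} : Set (P × P)) :=
            (isCongruence_congGen L _).1 x a ((L.join_spec X a hXa).2.1 x hx)
          have hab : ((a, b)) ∈ congGen L ({(a, b)} : Set (P × P)) :=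
            subset_congGen L _ rfl
          exact (isCongruence_congGen L _).2.2.1 x a b hxa hab
      rw [hsingle a b, hcg, hφsup S, hS, Finset.sup_image]
      rw [Finset.sup'_eq_sup hX]
      rfl
    · intro X a hXa hX b
      set S : Finset (P × P) := X.image (fun x => (b, x)) with hS
      have hcg : congGen L ({(b, a)} : Set (P × P)) = congGen L ↑S := by
        apply le_antisymm
        · refine congGen_le L (isCongruence_congGen L ↑S) (Set.singleton_subset_iff.mpr ?_)
          refine ((isCongruence_congGen L ↑S).2.2.2.2 X a hXa).2 b (fun x hx => ?_)
          exact subset_congGen L ↑S (Finset.mem_coe.mpr (Finset.mem_image_of_mem _ hx))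
        · refine congGen_le L (isCongruence_congGen L _) ?_
          intro p hp
          simp only [hS, Finset.coe_image, Set.mem_image, Finset.mem_coe] at hp
          obtain ⟨x, hx, rfl⟩ := hp
          have hax : (a, x) ∈ congGen L ({(b, a)} : Set (P × P)) :=
            (isCongruence_congGen L _).1 a x ((L.meet_spec X a hXa).2.1 x hx)
          have hba : ((b, a)) ∈ congGen L ({(b, a)} : Set (P × P)) :=
            subset_congGen L _ rfl
          exact (isCongruence_congGen L _).2.2.1 b a x hba hax
      rw [hsingle b a, hcg, hφsup S, hS, Finset.sup_image]
      rw [Finset.sup'_eq_sup hX]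
      rfl
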